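/- arXiv:1608.04813 — 3 statements merged into one kernel-verified Lean document; each statement's English description precedes it below -/
import Mathlib

section
/- Let X₁,...,X_λ be i.i.d. random variables with continuous c.d.f. F (of the function values f(Xᵢ)). Define the weight function W(i) = Σ_{k=l_i+1}^{u_i} w_k/(u_i - l_i), where l_i = #{j : f(X_j) < f(X_i)} and u_i = #{j : f(X_j) ≤ f(X_i)}. Then the conditional expectation satisfies E[W(i) | X_i] = Σ_{k=1}^{λ} w_k · C(λ-1, k-1) · F(f(X_i))^{k-1} (1 - F(f(X_i)))^{λ-k} almost surely. -/
open MeasureTheory ProbabilityTheory Finset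
open scoped ENNReal

section Aux

variable {E : Type*} [MeasurableSpace E]

/-- continuity of the cdf implies the open cdf agrees -/
lemma aux_lt_measure (ν : Measure E) [IsProbabilityMeasure ν]
    (f : E → ℝ) (hf : Measurable f)
    (F : ℝ → ℝ) (hF : ∀ t, F t = (ν {y | f y ≤ t}).toReal) (hFc : Continuous F) :
    ∀ t, ν {y | f y < t} = ENNReal.ofReal (F t) := by
  have hle : ∀ t, ν {y | f y ≤ t} = ENNReal.ofReal (F t) := fun t => by
    rw [hF t, ENNReal.ofReal_toReal (measure_ne_top ν _)]
  intro t
  have hmono : Monotone fun n : ℕ => {y | f y ≤ t - 1/(n+1)} := by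
    intro a b hab y hy
    simp only [Set.mem_setOf_eq] at *
    have h1 : (1:ℝ)/(b+1) ≤ 1/(a+1) := by
      apply one_div_le_one_div_of_le <;> [positivity; exact_mod_cast by omega]
    linarith
  have hunion : {y | f y < t} = ⋃ n : ℕ, {y | f y ≤ t - 1/(n+1)} := by
    ext y
    simp only [Set.mem_setOf_eq, Set.mem_iUnion]
    constructor
    · intro h
      obtain ⟨n, hn⟩ := exists_nat_one_div_lt (sub_pos.mpr h)
      exact ⟨n, by push_cast at hn ⊢; linarith⟩
    · rintro ⟨n, hn⟩
      have : (0:ℝ) < 1/(n+1) := by positivity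
      linarith
  have htend : Filter.Tendsto (fun n : ℕ => ν {y | f y ≤ t - 1/(n+1)}) Filter.atTop
      (nhds (ν {y | f y < t})) := by
    rw [hunion]
    exact tendsto_measure_iUnion_atTop hmono
  have h1 : Filter.Tendsto (fun n : ℕ => t - 1/((n:ℝ)+1)) Filter.atTop (nhds t) := by
    have := tendsto_one_div_add_atTop_nhds_zero_nat (𝕜 := ℝ)
    have h2 : Filter.Tendsto (fun n : ℕ => t - 1/((n:ℝ)+1)) Filter.atTop (nhds (t - 0)) :=
      Filter.Tendsto.sub tendsto_const_nhds this
    simpa using h2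
  have htend2 : Filter.Tendsto (fun n : ℕ => ν {y | f y ≤ t - 1/(n+1)}) Filter.atTop
      (nhds (ENNReal.ofReal (F t))) := by
    simp only [hle]
    exact (ENNReal.continuous_ofReal.tendsto _).comp ((hFc.tendsto t).comp h1)
  exact tendsto_nhds_unique htend htend2

lemma aux_eq_zero (ν : Measure E) [IsProbabilityMeasure ν]
    (f : E → ℝ) (hf : Measurable f)
    (F : ℝ → ℝ) (hF : ∀ t, F t = (ν {y | f y ≤ t}).toReal) (hFc : Continuous F) :
    ∀ t, ν {y | f y = t} = 0 := by
  intro t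
  have hle : ν {y | f y ≤ t} = ENNReal.ofReal (F t) := by
    rw [hF t, ENNReal.ofReal_toReal (measure_ne_top ν _)]
  have hlt := aux_lt_measure ν f hf F hF hFc t
  have hsplit : {y | f y ≤ t} = {y | f y < t} ∪ {y | f y = t} := by
    ext y; simp only [Set.mem_setOf_eq, Set.mem_union]; exact le_iff_lt_or_eq
  have hdisj : Disjoint {y | f y < t} {y | f y = t} := by
    rw [Set.disjoint_left]
    intro y hy hy'
    simp only [Set.mem_setOf_eq] at *
    exact absurd hy' (ne_of_lt hy)
  have hm : MeasurableSet {y | f y = t} := hf (measurableSet_singleton t)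
  have := measure_union (μ := ν) hdisj hm
  rw [← hsplit, hle, hlt] at this
  have hne : ENNReal.ofReal (F t) ≠ ⊤ := ENNReal.ofReal_ne_top
  nth_rewrite 1 [← add_zero (ENNReal.ofReal (F t))] at this
  exact ((ENNReal.add_right_inj hne).mp this).symm

end Aux

/-- Conditional expectation of the weight function: for i.i.d. candidate solutions
`X₁,…,X_λ` whose function values `f(Xᵢ)` have a continuous c.d.f. `F`, the weight
`W(i) = ∑_{k=lᵢ+1}^{uᵢ} w_k/(uᵢ-lᵢ)` (with `lᵢ, uᵢ` the numbers of strictly resp.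
weakly better solutions) satisfies
`E[W(i) | Xᵢ] = ∑_{k=1}^{λ} w_k C(λ-1,k-1) F(f(Xᵢ))^{k-1}(1-F(f(Xᵢ)))^{λ-k}` a.s. -/
theorem condexp_weight_function
    {Ω : Type*} [MeasurableSpace Ω] (μ : Measure Ω) [IsProbabilityMeasure μ]
    {E : Type*} [MeasurableSpace E]
    (lam : ℕ) (X : Fin lam → Ω → E)
    (hmeas : ∀ i, Measurable (X i))
    (hindep : iIndepFun X μ)
    (ν : Measure E) (hlaw : ∀ i, μ.map (X i) = ν)
    (f : E → ℝ) (hf : Measurable f)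
    (F : ℝ → ℝ) (hF : ∀ t, F t = (ν {y | f y ≤ t}).toReal) (hFc : Continuous F)
    (w : ℕ → ℝ) (W : Fin lam → Ω → ℝ)
    (hW : ∀ i ω, W i ω =
      (∑ k ∈ Finset.Ioc (Nat.card {j : Fin lam // f (X j ω) < f (X i ω)})
          (Nat.card {j : Fin lam // f (X j ω) ≤ f (X i ω)}), w k) /
        ((Nat.card {j : Fin lam // f (X j ω) ≤ f (X i ω)} : ℝ) -
          (Nat.card {j : Fin lam // f (X j ω) < f (X i ω)} : ℝ))) :
    ∀ i : Fin lam,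
      μ[W i | MeasurableSpace.comap (X i) inferInstance] =ᵐ[μ] fun ω =>
        ∑ k ∈ Finset.Icc 1 lam,
          w k * ((lam - 1).choose (k - 1) : ℝ) *
            F (f (X i ω)) ^ (k - 1) * (1 - F (f (X i ω))) ^ (lam - k) := by
  classical
  intro i
  have hν : IsProbabilityMeasure ν := by
    rw [← hlaw i]; exact Measure.isProbabilityMeasure_map (hmeas i).aemeasurable
  have hlam : 0 < lam := i.pos
  have hfX : ∀ j : Fin lam, Measurable fun ω => f (X j ω) := fun j => hf.comp (hmeas j)
  set p : E → ℝ := fun x => F (f x) with hp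
  have hpmeas : Measurable p := hFc.measurable.comp hf
  have hp0 : ∀ x, 0 ≤ p x := fun x => by rw [hp]; simp only [hF]; exact ENNReal.toReal_nonneg
  have hp1 : ∀ x, p x ≤ 1 := by
    intro x
    simp only [hp, hF]
    have h1 : ν {y | f y ≤ f x} ≤ 1 := prob_le_one
    calc (ν {y | f y ≤ f x}).toReal ≤ (1 : ℝ≥0∞).toReal :=
          ENNReal.toReal_mono (by norm_num) h1
      _ = 1 := by simp
  have hle : ∀ t, ν {y | f y ≤ t} = ENNReal.ofReal (F t) := fun t => by
    rw [hF t, ENNReal.ofReal_toReal (measure_ne_top ν _)]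
  have hlt := aux_lt_measure ν f hf F hF hFc
  have heq0 := aux_eq_zero ν f hf F hF hFc
  -- the subtype index, sub-tuple and its law
  set ι' := {j : Fin lam // j ≠ i} with hι'
  set V : Ω → (ι' → E) := fun ω j => X j.1 ω with hV
  set π : Measure (ι' → E) := Measure.pi fun _ => ν with hπ
  have hcard : Fintype.card ι' = lam - 1 := by
    have h1 : Fintype.card ι' = Fintype.card (Fin lam) - Fintype.card {j : Fin lam // j = i} :=
      Fintype.card_subtype_compl _
    rw [h1, Fintype.card_fin, Fintype.card_subtype_eq]
  have hVmeas : Measurable V := measurable_pi_lambda _ fun j => hmeas j.1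
  have hVlaw : μ.map V = π := by
    rw [hπ]
    refine (Measure.pi_eq fun s hs => ?_).symm
    set s' : (j : Fin lam) → Set E := fun j => if h : j ≠ i then s ⟨j, h⟩ else Set.univ with hs'
    have hs'meas : ∀ j, MeasurableSet (s' j) := by
      intro j
      simp only [hs']
      by_cases h : j ≠ i
      · rw [dif_pos h]; exact hs _
      · rw [dif_neg h]; exact MeasurableSet.univ
    rw [Measure.map_apply hVmeas (MeasurableSet.univ_pi hs)]
    have hpre : V ⁻¹' Set.univ.pi s = ⋂ j ∈ univ.erase i, X j ⁻¹' s' j := by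
      ext ω
      simp only [Set.mem_preimage, Set.mem_pi, Set.mem_univ, true_implies, Set.mem_iInter,
        Finset.mem_erase, hV]
      constructor
      · rintro h j ⟨hj, -⟩
        simp only [hs']
        rw [dif_pos hj]
        exact h ⟨j, hj⟩
      · intro h j
        have := h j.1 ⟨j.2, mem_univ _⟩
        simp only [hs'] at this
        rw [dif_pos j.2] at this
        exact this
    rw [hpre, hindep.meas_biInter (S := univ.erase i)
      (s := fun j => X j ⁻¹' s' j) (fun j _ => ⟨s' j, hs'meas j, rfl⟩)]
    have hμν : ∀ j, μ (X j ⁻¹' s' j) = ν (s' j) := by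
      intro j
      rw [← hlaw j, Measure.map_apply (hmeas j) (hs'meas j)]
    simp only [hμν]
    rw [Finset.prod_subtype (p := fun j => j ≠ i) (univ.erase i)
      (fun j => by simp [Finset.mem_erase]) (fun j => ν (s' j))]
    refine Finset.prod_congr rfl fun j _ => ?_
    simp only [hs']
    rw [dif_pos j.2]
  have hZV : IndepFun (X i) V μ := by
    have h := hindep.indepFun_finset {i} (univ.erase i)
      (by simp) hmeas
    have h2 := h.comp (_mγ := (inferInstance : MeasurableSpace E)) (_mγ' := MeasurableSpace.pi) (φ := fun v : (({i} : Finset (Fin lam)) → E) =>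
        v ⟨i, Finset.mem_singleton_self i⟩)
      (ψ := fun v : ({x // x ∈ univ.erase i} → E) =>
        (fun j : ι' => v ⟨j.1, Finset.mem_erase.mpr ⟨j.2, mem_univ _⟩⟩))
      (measurable_pi_apply _) (measurable_pi_lambda _ fun j => measurable_pi_apply _)
    exact h2
  set κ : Ω → E × (ι' → E) := fun ω => (X i ω, V ω) with hκ
  have hκmeas : Measurable κ := (hmeas i).prodMk hVmeas
  have hκlaw : μ.map κ = ν.prod π := by
    rw [← hlaw i, ← hVlaw]
    exact (indepFun_iff_map_prod_eq_prod_map_map (hmeas i).aemeasurable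
      hVmeas.aemeasurable).mp hZV
  -- the rank finset
  set T : Ω → Finset (Fin lam) := fun ω => univ.filter (fun j => f (X j ω) < f (X i ω)) with hT
  have hiT : ∀ ω, i ∉ T ω := by
    intro ω h
    rw [hT] at h
    simp only [mem_filter] at h
    exact absurd h.2 (lt_irrefl _)
  have hTsub : ∀ ω, T ω ⊆ univ.erase i := by
    intro ω j hj
    exact Finset.mem_erase.mpr ⟨fun h => hiT ω (h ▸ hj), mem_univ _⟩
  have hTcard : ∀ ω, (T ω).card ≤ lam - 1 := by
    intro ω
    calc (T ω).card ≤ (univ.erase i).card := Finset.card_le_card (hTsub ω)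
      _ = lam - 1 := by rw [Finset.card_erase_of_mem (mem_univ i)]; simp
  -- no ties a.e.
  have htie : ∀ᵐ ω ∂μ, ∀ j : Fin lam, j ≠ i → f (X j ω) ≠ f (X i ω) := by
    have h1 : ∀ j : Fin lam, j ≠ i → μ {ω | f (X j ω) = f (X i ω)} = 0 := by
      intro j hj
      have hind : IndepFun (X j) (X i) μ := hindep.indepFun hj
      have hmap : μ.map (fun ω => (X j ω, X i ω)) = ν.prod ν := by
        have := (indepFun_iff_map_prod_eq_prod_map_map (hmeas j).aemeasurable
          (hmeas i).aemeasurable).mp hind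
        rw [hlaw j, hlaw i] at this
        exact this
      have hD : MeasurableSet {q : E × E | f q.1 = f q.2} :=
        measurableSet_eq_fun (hf.comp measurable_fst) (hf.comp measurable_snd)
      have hpre : {ω | f (X j ω) = f (X i ω)} =
          (fun ω => (X j ω, X i ω)) ⁻¹' {q : E × E | f q.1 = f q.2} := rfl
      rw [hpre, ← Measure.map_apply ((hmeas j).prodMk (hmeas i)) hD, hmap,
        Measure.prod_apply hD]
      have hz : ∀ x, ν (Prod.mk x ⁻¹' {q : E × E | f q.1 = f q.2}) = 0 := by
        intro x
        have : Prod.mk x ⁻¹' {q : E × E | f q.1 = f q.2} = {y | f y = f x} := by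
          ext y; simp only [Set.mem_preimage, Set.mem_setOf_eq]; exact eq_comm
        rw [this, heq0]
      simp only [hz, lintegral_zero]
    rw [ae_all_iff]
    intro j
    rcases eq_or_ne j i with rfl | hj
    · exact Filter.Eventually.of_forall fun ω h => absurd rfl h
    · rw [ae_iff]
      refine measure_mono_null ?_ (h1 j hj)
      intro ω hω
      simp only [Set.mem_setOf_eq] at hω ⊢
      push_neg at hω
      exact hω.2
  -- a.e. identification of W i
  set W' : Ω → ℝ := fun ω => w ((T ω).card + 1) with hW'
  have hWW' : W i =ᵐ[μ] W' := by
    filter_upwards [htie] with ω hω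
    rw [hW i ω]
    have hl : Nat.card {j : Fin lam // f (X j ω) < f (X i ω)} = (T ω).card := by
      rw [Nat.card_eq_fintype_card, Fintype.card_subtype, hT]
    have hu : Nat.card {j : Fin lam // f (X j ω) ≤ f (X i ω)} = (T ω).card + 1 := by
      rw [Nat.card_eq_fintype_card, Fintype.card_subtype]
      have hins : univ.filter (fun j => f (X j ω) ≤ f (X i ω)) = insert i (T ω) := by
        ext j
        simp only [mem_filter, mem_univ, true_and, mem_insert, hT]
        constructor
        · intro hj
          rcases eq_or_ne j i with rfl | hji
          · exact Or.inl rfl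
          · exact Or.inr (lt_of_le_of_ne hj (hω j hji))
        · rintro (rfl | hj)
          · exact le_refl _
          · exact le_of_lt hj
      rw [hins, Finset.card_insert_of_notMem (hiT ω)]
    rw [hl, hu, Nat.Ioc_succ_singleton, Finset.sum_singleton]
    have hden : (((T ω).card + 1 : ℕ) : ℝ) - ((T ω).card : ℝ) = 1 := by push_cast; ring
    rw [hden, div_one, hW']
  -- measurability of W'
  have hcnt : Measurable fun ω => (T ω).card := by
    have h1 : ∀ ω, (T ω).card = ∑ j : Fin lam, if f (X j ω) < f (X i ω) then 1 else 0 := by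
      intro ω; rw [hT]; rw [Finset.card_filter]
    simp only [h1]
    exact Finset.measurable_sum _ fun j _ =>
      Measurable.ite (measurableSet_lt (hfX j) (hfX i)) measurable_const measurable_const
  have hW'meas : Measurable W' := (measurable_from_top (f := fun c : ℕ => w (c+1))).comp hcnt
  -- integrability
  set M : ℝ := ∑ m ∈ range lam, |w (m+1)| with hM
  have hW'bd : ∀ ω, |W' ω| ≤ M := by
    intro ω
    rw [hW', hM]
    have h1 : (T ω).card ∈ range lam := by
      rw [Finset.mem_range]; have := hTcard ω; omega
    exact Finset.single_le_sum (f := fun m => |w (m+1)|) (fun m _ => abs_nonneg _) h1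
  have hW'int : Integrable W' μ := by
    refine Integrable.mono' (integrable_const M) hW'meas.aestronglyMeasurable ?_
    exact Filter.Eventually.of_forall hW'bd
  have hWint : Integrable (W i) μ := hW'int.congr hWW'.symm
  -- the conditional expectation candidate
  set g : E → ℝ := fun x =>
    ∑ m ∈ range lam, w (m+1) * ((lam-1).choose m : ℝ) * (p x ^ m * (1 - p x)^(lam-1-m)) with hg
  have hgmeas : Measurable g := by
    apply Finset.measurable_sum
    intro m _
    exact ((hpmeas.pow_const m).mul (((measurable_const.sub hpmeas).pow_const _))).const_mul _
  set Mg : ℝ := ∑ m ∈ range lam, |w (m+1)| * ((lam-1).choose m : ℝ) with hMg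
  have hgbd : ∀ x, |g x| ≤ Mg := by
    intro x
    rw [hg, hMg]
    refine (Finset.abs_sum_le_sum_abs _ _).trans (Finset.sum_le_sum fun m _ => ?_)
    rw [abs_mul, abs_mul]
    have h1 : |p x ^ m * (1 - p x)^(lam-1-m)| ≤ 1 := by
      rw [abs_mul, abs_pow, abs_pow]
      have := hp0 x; have := hp1 x
      have h2 : |p x| ≤ 1 := by rw [abs_of_nonneg]; linarith; linarith
      have h3 : |1 - p x| ≤ 1 := by rw [abs_of_nonneg]; linarith; linarith
      calc |p x| ^ m * |1 - p x| ^ (lam-1-m) ≤ 1 ^ m * 1 ^ (lam-1-m) :=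
            mul_le_mul (pow_le_pow_left₀ (abs_nonneg _) h2 _)
              (pow_le_pow_left₀ (abs_nonneg _) h3 _)
              (pow_nonneg (abs_nonneg _) _) (by positivity)
        _ = 1 := by norm_num
    have h4 : |((lam-1).choose m : ℝ)| = ((lam-1).choose m : ℝ) := abs_of_nonneg (by positivity)
    rw [h4]
    calc |w (m+1)| * ((lam-1).choose m : ℝ) * |p x ^ m * (1 - p x)^(lam-1-m)|
        ≤ |w (m+1)| * ((lam-1).choose m : ℝ) * 1 := by
          apply mul_le_mul_of_nonneg_left h1; positivity
      _ = |w (m+1)| * ((lam-1).choose m : ℝ) := mul_one _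
  have hgXint : Integrable (fun ω => g (X i ω)) μ := by
    refine Integrable.mono' (integrable_const Mg)
      (hgmeas.comp (hmeas i)).aestronglyMeasurable ?_
    exact Filter.Eventually.of_forall fun ω => hgbd (X i ω)
  -- the goal function is g ∘ X i
  have hgr : ∀ x, (∑ k ∈ Finset.Icc 1 lam, w k * ((lam - 1).choose (k - 1) : ℝ)
      * p x ^ (k - 1) * (1 - p x) ^ (lam - k)) = g x := by
    intro x
    rw [hg, ← Finset.Ico_add_one_right_eq_Icc, Finset.sum_Ico_eq_sum_range]
    have hr : lam + 1 - 1 = lam := by omega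
    rw [hr]
    refine Finset.sum_congr rfl fun m _ => ?_
    have h1 : 1 + m - 1 = m := by omega
    have h2 : lam - (1 + m) = lam - 1 - m := by omega
    have h3 : 1 + m = m + 1 := by omega
    rw [h1, h2, h3]
    ring
  -- measurable sets for the decomposition
  have hESmeas : ∀ S : Finset (Fin lam), MeasurableSet {ω | T ω = S} := by
    intro S
    have h1 : {ω | T ω = S} = ⋂ j : Fin lam,
        {ω | (f (X j ω) < f (X i ω)) = (j ∈ S)} := by
      ext ω
      simp only [Set.mem_setOf_eq, Set.mem_iInter, hT]
      constructor
      · intro h j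
        rw [← h]
        simp only [mem_filter, mem_univ, true_and, eq_iff_iff]
      · intro h
        ext j
        simp only [mem_filter, mem_univ, true_and]
        rw [← h j]
    rw [h1]
    refine MeasurableSet.iInter fun j => ?_
    have : {ω | (f (X j ω) < f (X i ω)) = (j ∈ S)} =
        if j ∈ S then {ω | f (X j ω) < f (X i ω)} else {ω | f (X j ω) < f (X i ω)}ᶜ := by
      by_cases hj : j ∈ S <;> ext ω <;> simp [hj]
    rw [this]
    by_cases hj : j ∈ S <;> simp only [hj, if_true, if_false]
    · exact measurableSet_lt (hfX j) (hfX i)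
    · exact (measurableSet_lt (hfX j) (hfX i)).compl
  -- core measure computation
  have hcore : ∀ (A : Set E), MeasurableSet A → ∀ S : Finset (Fin lam), S ⊆ univ.erase i →
      μ ((X i ⁻¹' A) ∩ {ω | T ω = S}) =
        ∫⁻ z in A, (ENNReal.ofReal (p z))^S.card
          * (ENNReal.ofReal (1 - p z))^(lam-1-S.card) ∂ν := by
    intro A hA S hS
    have hiS : i ∉ S := fun h => (Finset.mem_erase.mp (hS h)).1 rfl
    set U : Set (E × (ι' → E)) :=
      {q | q.1 ∈ A ∧ ∀ j : ι', (j.1 ∈ S ↔ f (q.2 j) < f q.1)} with hU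
    have hUmeas : MeasurableSet U := by
      have hrw : U = (Prod.fst ⁻¹' A) ∩
          ⋂ j : ι', {q : E × (ι' → E) | (j.1 ∈ S ↔ f (q.2 j) < f q.1)} := by
        ext q
        simp only [hU, Set.mem_inter_iff, Set.mem_preimage, Set.mem_iInter, Set.mem_setOf_eq]
      rw [hrw]
      refine (measurable_fst hA).inter (MeasurableSet.iInter fun j => ?_)
      have hlt' : MeasurableSet {q : E × (ι' → E) | f (q.2 j) < f q.1} :=
        measurableSet_lt (hf.comp ((measurable_pi_apply j).comp measurable_snd))
          (hf.comp measurable_fst)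
      by_cases hj : j.1 ∈ S
      · have : {q : E × (ι' → E) | (j.1 ∈ S ↔ f (q.2 j) < f q.1)} =
            {q : E × (ι' → E) | f (q.2 j) < f q.1} := by
          ext q; simp [hj]
        rw [this]; exact hlt'
      · have : {q : E × (ι' → E) | (j.1 ∈ S ↔ f (q.2 j) < f q.1)} =
            {q : E × (ι' → E) | f (q.2 j) < f q.1}ᶜ := by
          ext q; simp [hj]
        rw [this]; exact hlt'.compl
    have hpreU : (X i ⁻¹' A) ∩ {ω | T ω = S} = κ ⁻¹' U := by
      ext ω
      simp only [Set.mem_inter_iff, Set.mem_preimage, Set.mem_setOf_eq, hU, hκ, hV]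
      constructor
      · rintro ⟨hAω, hTω⟩
        refine ⟨hAω, fun j => ?_⟩
        rw [← hTω, hT]
        simp only [mem_filter, mem_univ, true_and]
      · rintro ⟨hAω, hj⟩
        refine ⟨hAω, ?_⟩
        ext j
        rcases eq_or_ne j i with rfl | hji
        · simp only [hT, mem_filter, mem_univ, true_and]
          constructor
          · intro h; exact absurd h (lt_irrefl _)
          · intro h; exact absurd h hiS
        · have := hj ⟨j, hji⟩
          rw [hT]
          simp only [mem_filter, mem_univ, true_and]
          exact this.symm
    rw [hpreU, ← Measure.map_apply hκmeas hUmeas, hκlaw, Measure.prod_apply hUmeas]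
    have hslice : ∀ z, π (Prod.mk z ⁻¹' U) =
        Set.indicator A (fun z => (ENNReal.ofReal (p z))^S.card
          * (ENNReal.ofReal (1 - p z))^(lam-1-S.card)) z := by
      intro z
      set Bz : ι' → Set E :=
        fun j => if j.1 ∈ S then {e | f e < f z} else {e | ¬ f e < f z} with hBz
      by_cases hz : z ∈ A
      · have h1 : Prod.mk z ⁻¹' U = Set.univ.pi Bz := by
          ext v
          simp only [Set.mem_preimage, hU, Set.mem_setOf_eq, Set.mem_pi, Set.mem_univ,
            true_implies, hBz]
          constructor
          · rintro ⟨-, hv⟩ j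
            by_cases hj : j.1 ∈ S
            · rw [if_pos hj]; exact (hv j).mp hj
            · rw [if_neg hj]; exact fun h => hj ((hv j).mpr h)
          · intro hv
            refine ⟨hz, fun j => ?_⟩
            by_cases hj : j.1 ∈ S
            · have := hv j; rw [if_pos hj] at this
              exact ⟨fun _ => this, fun _ => hj⟩
            · have := hv j; rw [if_neg hj] at this
              exact ⟨fun h => absurd h hj, fun h => absurd h this⟩
        rw [h1, hπ, Measure.pi_pi]
        have hval : ∀ j : ι', ν (Bz j) =
            if j.1 ∈ S then ENNReal.ofReal (p z) else ENNReal.ofReal (1 - p z) := by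
          intro j
          simp only [hBz]
          by_cases hj : j.1 ∈ S
          · rw [if_pos hj, if_pos hj]; exact hlt (f z)
          · rw [if_neg hj, if_neg hj]
            have hcompl : {e | ¬ f e < f z} = {e | f e < f z}ᶜ := rfl
            rw [hcompl, measure_compl (measurableSet_lt hf measurable_const)
              (measure_ne_top _ _), hlt (f z), measure_univ]
            rw [ENNReal.ofReal_sub 1 (hp0 z), ENNReal.ofReal_one]
        calc ∏ j : ι', ν (Bz j)
            = ∏ j : ι', (if j.1 ∈ S then ENNReal.ofReal (p z)
                else ENNReal.ofReal (1 - p z)) := Finset.prod_congr rfl fun j _ => hval j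
          _ = (ENNReal.ofReal (p z))^S.card * (ENNReal.ofReal (1 - p z))^(lam-1-S.card) := by
              rw [Finset.prod_ite (fun _ => ENNReal.ofReal (p z))
                (fun _ => ENNReal.ofReal (1 - p z)), Finset.prod_const, Finset.prod_const]
              have hc1 : (univ.filter fun j : ι' => j.1 ∈ S).card = S.card := by
                refine Finset.card_bij (fun j _ => j.1) ?_ ?_ ?_
                · intro a ha; exact (mem_filter.mp ha).2
                · intro a _ b _ h; exact Subtype.ext h
                · intro b hb
                  exact ⟨⟨b, (Finset.mem_erase.mp (hS hb)).1⟩,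
                    mem_filter.mpr ⟨mem_univ _, hb⟩, rfl⟩
              have hc2 : (univ.filter fun j : ι' => ¬ j.1 ∈ S).card = lam - 1 - S.card := by
                have h := Finset.card_filter_add_card_filter_not
                  (s := (univ : Finset ι')) (p := fun j => j.1 ∈ S)
                rw [Finset.card_univ, hcard, hc1] at h
                omega
              rw [hc1, hc2]
        · rw [Set.indicator_of_mem hz]
      · have h1 : Prod.mk z ⁻¹' U = ∅ := by
          ext v
          simp only [Set.mem_preimage, hU, Set.mem_setOf_eq, Set.mem_empty_iff_false,
            iff_false, not_and]
          intro h; exact absurd h hz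
        rw [h1, Set.indicator_of_notMem hz]
        simp
    rw [lintegral_congr hslice, lintegral_indicator hA]
  -- bridging toReal of lintegral to Bochner integral
  have hkey : ∀ (A : Set E), MeasurableSet A → ∀ m : ℕ,
      (∫⁻ z in A, (ENNReal.ofReal (p z))^m * (ENNReal.ofReal (1 - p z))^(lam-1-m) ∂ν).toReal
        = ∫ z in A, p z ^ m * (1 - p z)^(lam-1-m) ∂ν := by
    intro A hA m
    rw [integral_eq_lintegral_of_nonneg_ae (f := fun z => p z ^ m * (1 - p z)^(lam-1-m))
      (Filter.Eventually.of_forall fun z =>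
        mul_nonneg (pow_nonneg (hp0 z) _) (pow_nonneg (by have := hp1 z; linarith) _))
      ((hpmeas.pow_const m).mul
        ((measurable_const.sub hpmeas).pow_const _)).aestronglyMeasurable]
    congr 1
    refine lintegral_congr fun z => ?_
    rw [ENNReal.ofReal_mul (pow_nonneg (hp0 z) m), ENNReal.ofReal_pow (hp0 z),
      ENNReal.ofReal_pow (by have := hp1 z; linarith)]
  -- integrability of term functions
  have hterm_int : ∀ (A : Set E) (m : ℕ),
      Integrable (fun z => p z ^ m * (1 - p z)^(lam-1-m)) (ν.restrict A) := by
    intro A m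
    refine Integrable.mono' (integrable_const 1)
      ((hpmeas.pow_const m).mul
        ((measurable_const.sub hpmeas).pow_const _)).aestronglyMeasurable ?_
    refine Filter.Eventually.of_forall fun z => ?_
    have := hp0 z; have := hp1 z
    rw [Real.norm_eq_abs, abs_mul, abs_pow, abs_pow, abs_of_nonneg (by linarith), abs_of_nonneg (by linarith)]
    calc p z ^ m * (1 - p z) ^ (lam-1-m) ≤ 1 ^ m * 1 ^ (lam-1-m) :=
          mul_le_mul (pow_le_pow_left₀ (by linarith) (by linarith) _)
            (pow_le_pow_left₀ (by linarith) (by linarith) _)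
            (pow_nonneg (by linarith) _) (by positivity)
      _ = 1 := by norm_num
  -- the main set-integral identity
  have hsetint : ∀ (A : Set E), MeasurableSet A →
      ∫ ω in X i ⁻¹' A, g (X i ω) ∂μ = ∫ ω in X i ⁻¹' A, W i ω ∂μ := by
    intro A hA
    have hsm : MeasurableSet (X i ⁻¹' A) := hmeas i hA
    -- LHS computation
    have hL : ∫ ω in X i ⁻¹' A, g (X i ω) ∂μ = ∑ m ∈ range lam,
        w (m+1) * ((lam-1).choose m : ℝ) * ∫ z in A, p z ^ m * (1 - p z)^(lam-1-m) ∂ν := by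
      have h1 : ∫ ω in X i ⁻¹' A, g (X i ω) ∂μ = ∫ z in A, g z ∂ν := by
        have h2 := setIntegral_map (μ := μ) (g := X i) (f := g) hA
          (by rw [hlaw i]; exact hgmeas.aestronglyMeasurable) (hmeas i).aemeasurable
        rw [hlaw i] at h2
        exact h2.symm
      rw [h1, hg]
      rw [integral_finset_sum _ (fun m _ => ((hterm_int A m).const_mul _))]
      exact Finset.sum_congr rfl fun m _ => integral_const_mul _ _
    rw [hL]
    -- RHS computation
    have h2 : ∫ ω in X i ⁻¹' A, W i ω ∂μ = ∫ ω in X i ⁻¹' A, W' ω ∂μ :=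
      integral_congr_ae (ae_restrict_of_ae hWW')
    have h3 : ∫ ω in X i ⁻¹' A, W' ω ∂μ = ∫ ω, Set.indicator (X i ⁻¹' A) W' ω ∂μ :=
      (integral_indicator hsm).symm
    have h4 : ∀ ω, Set.indicator (X i ⁻¹' A) W' ω = ∑ S ∈ (univ.erase i).powerset,
        Set.indicator ((X i ⁻¹' A) ∩ {ω' | T ω' = S}) (fun _ => w (S.card + 1)) ω := by
      intro ω
      by_cases hω : ω ∈ X i ⁻¹' A
      · rw [Set.indicator_of_mem hω]
        rw [Finset.sum_eq_single (T ω)]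
        · rw [Set.indicator_of_mem (Set.mem_inter hω (show ω ∈ {ω' | T ω' = T ω} from rfl))]
        · intro S _ hS
          rw [Set.indicator_of_notMem]
          rintro ⟨-, h⟩
          exact hS h.symm
        · intro h
          exact absurd (Finset.mem_powerset.mpr (hTsub ω)) h
      · rw [Set.indicator_of_notMem hω]
        symm
        refine Finset.sum_eq_zero fun S _ => ?_
        rw [Set.indicator_of_notMem]
        rintro ⟨h, -⟩; exact hω h
    have h5 : ∫ ω, Set.indicator (X i ⁻¹' A) W' ω ∂μ = ∑ S ∈ (univ.erase i).powerset,
        ∫ ω, Set.indicator ((X i ⁻¹' A) ∩ {ω' | T ω' = S}) (fun _ => w (S.card + 1)) ω ∂μ := by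
      rw [← integral_finset_sum _ (fun S _ =>
        (integrable_const _).indicator (hsm.inter (hESmeas S)))]
      exact integral_congr_ae (Filter.Eventually.of_forall h4)
    have h6 : ∀ S ∈ (univ.erase i).powerset,
        ∫ ω, Set.indicator ((X i ⁻¹' A) ∩ {ω' | T ω' = S}) (fun _ => w (S.card + 1)) ω ∂μ
          = w (S.card + 1) * ∫ z in A, p z ^ S.card * (1 - p z)^(lam-1-S.card) ∂ν := by
      intro S hSmem
      have hSsub : S ⊆ univ.erase i := Finset.mem_powerset.mp hSmem
      rw [integral_indicator_const _ (hsm.inter (hESmeas S)), measureReal_def, hcore A hA S hSsub,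
        smul_eq_mul, hkey A hA S.card, mul_comm]
    rw [h2, h3, h5, Finset.sum_congr rfl h6]
    rw [Finset.sum_powerset]
    have hcerase : (univ.erase i).card = lam - 1 := by
      rw [Finset.card_erase_of_mem (mem_univ i), Finset.card_univ, Fintype.card_fin]
    rw [hcerase]
    have hrange : lam - 1 + 1 = lam := by omega
    rw [hrange]
    refine (Finset.sum_congr rfl fun m hm => ?_).symm
    have h7 : ∀ S ∈ Finset.powersetCard m (univ.erase i),
        w (S.card + 1) * ∫ z in A, p z ^ S.card * (1 - p z)^(lam-1-S.card) ∂ν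
          = w (m + 1) * ∫ z in A, p z ^ m * (1 - p z)^(lam-1-m) ∂ν := by
      intro S hS
      rw [(Finset.mem_powersetCard.mp hS).2]
    rw [Finset.sum_congr rfl h7, Finset.sum_const, Finset.card_powersetCard, hcerase,
      nsmul_eq_mul]
    ring
  -- apply the characterization of condexp
  have hm : MeasurableSpace.comap (X i) inferInstance ≤ _ := (hmeas i).comap_le
  haveI : SigmaFinite (μ.trim hm) := by
    have : IsFiniteMeasure (μ.trim hm) := isFiniteMeasure_trim hm
    infer_instance
  have hgm : AEStronglyMeasurable[MeasurableSpace.comap (X i) inferInstance]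
      (fun ω => g (X i ω)) μ := by
    refine StronglyMeasurable.aestronglyMeasurable ?_
    refine Measurable.stronglyMeasurable ?_
    exact hgmeas.comp (Measurable.of_comap_le le_rfl)
  have hmain : (fun ω => g (X i ω)) =ᵐ[μ] μ[W i | MeasurableSpace.comap (X i) inferInstance] := by
    refine ae_eq_condExp_of_forall_setIntegral_eq hm hWint ?_ ?_ hgm
    · intro s hs _
      exact (hgXint.integrableOn)
    · rintro s ⟨A, hA, rfl⟩ _
      exact hsetint A hA
  refine hmain.symm.trans ?_
  refine Filter.EventuallyEq.of_eq ?_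
  funext ω
  exact (hgr (X i ω)).symm
end

section
/- For integers 0 < k < n, the binomial coefficient satisfies C(n,k) < (n / (2π k (n-k)))^{1/2} · (n/k)^k · (n/(n-k))^{n-k}. -/
open Real

open Stirling Filter in

lemma sqrt_pi_lt_stirlingSeq (m : ℕ) (hm : m ≠ 0) : Real.sqrt π < stirlingSeq m := by
  obtain ⟨m, rfl⟩ := Nat.exists_eq_succ_of_ne_zero hm
  have hpos : (0:ℝ) < 1 / (2 * ((0:ℕ) + 1 : ℕ) + 1) * ((1 / (2 * ((m:ℕ) + 1 : ℕ) + 1)) ^ 2) ^ ((0:ℕ)+1 : ℕ) := by positivity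
  have hdiff : 0 < Real.log (stirlingSeq (m + 1)) - Real.log (stirlingSeq (m + 2)) :=
    hpos.trans_le (le_hasSum (log_stirlingSeq_diff_hasSum m) 0 fun k _ => by positivity)
  have h2 : stirlingSeq (m + 2) < stirlingSeq (m + 1) := by
    have := sub_pos.mp hdiff
    exact (Real.log_lt_log_iff (stirlingSeq'_pos (m+1)) (stirlingSeq'_pos m)).mp this
  refine lt_of_le_of_lt ?_ h2
  have ht : Tendsto (stirlingSeq ∘ Nat.succ) atTop (nhds (Real.sqrt π)) :=
    tendsto_stirlingSeq_sqrt_pi.comp (tendsto_add_atTop_nat 1)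
  exact stirlingSeq'_antitone.le_of_tendsto ht (m + 1)

open Stirling Filter in
/-- Robbins-type bound on the binomial coefficient: for `0 < k < n`,
`C(n,k) < √(n / (2π k (n-k))) · (n/k)^k · (n/(n-k))^(n-k)`. -/
theorem binomial_robbins_bound (n k : ℕ) (hk : 0 < k) (hkn : k < n) :
    (n.choose k : ℝ) <
      Real.sqrt ((n : ℝ) / (2 * Real.pi * k * (n - k))) *
        ((n : ℝ) / k) ^ k * ((n : ℝ) / (n - k)) ^ (n - k) := by
  set m := n - k with hmdef
  have hm : 0 < m := by omega
  have hkm : k + m = n := by omega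
  have hn : 0 < n := by omega
  have hcast : (n : ℝ) - k = (m : ℝ) := by rw [hmdef, Nat.cast_sub hkn.le]
  rw [hcast]
  have hN : (0:ℝ) < n := by exact_mod_cast hn
  have hK : (0:ℝ) < k := by exact_mod_cast hk
  have hM : (0:ℝ) < m := by exact_mod_cast hm
  set a := stirlingSeq n with hadef
  set b := stirlingSeq k with hbdef
  set c := stirlingSeq m with hcdef
  have hapos : 0 < a := by
    have := stirlingSeq'_pos (n - 1); rwa [Nat.sub_add_cancel hn] at this
  have hbpos : 0 < b := by
    have := stirlingSeq'_pos (k - 1); rwa [Nat.sub_add_cancel hk] at this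
  have hcpos : 0 < c := by
    have := stirlingSeq'_pos (m - 1); rwa [Nat.sub_add_cancel hm] at this
  -- factorials via stirlingSeq
  set Dn : ℝ := Real.sqrt (2*n) * ((n:ℝ)/Real.exp 1)^n with hDn
  set Dk : ℝ := Real.sqrt (2*k) * ((k:ℝ)/Real.exp 1)^k with hDk
  set Dm : ℝ := Real.sqrt (2*m) * ((m:ℝ)/Real.exp 1)^m with hDm
  have hDnpos : 0 < Dn := by rw [hDn]; positivity
  have hDkpos : 0 < Dk := by rw [hDk]; positivity
  have hDmpos : 0 < Dm := by rw [hDm]; positivity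
  have hfn : (n.factorial : ℝ) = a * Dn := by
    rw [hadef, stirlingSeq, div_mul_cancel₀ _ hDnpos.ne']
  have hfk : (k.factorial : ℝ) = b * Dk := by
    rw [hbdef, stirlingSeq, div_mul_cancel₀ _ hDkpos.ne']
  have hfm : (m.factorial : ℝ) = c * Dm := by
    rw [hcdef, stirlingSeq, div_mul_cancel₀ _ hDmpos.ne']
  have hchoose : (n.choose k : ℝ) = (n.factorial : ℝ) / ((k.factorial : ℝ) * (m.factorial : ℝ)) := by
    have := Nat.choose_mul_factorial_mul_factorial hkn.le
    field_simp
    push_cast [← this, hmdef]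
    ring
  -- key strict inequality
  have hsp : (0:ℝ) < Real.sqrt π := Real.sqrt_pos.mpr Real.pi_pos
  have hab : a ≤ b := by
    have := stirlingSeq'_antitone (show k - 1 ≤ n - 1 by omega)
    simp only [Function.comp_apply, Nat.succ_eq_add_one, Nat.sub_add_cancel hk,
      Nat.sub_add_cancel hn] at this
    exact this
  have hkey : a / (b * c) < (Real.sqrt π)⁻¹ := by
    calc a / (b * c) ≤ b / (b * c) := by gcongr
      _ = c⁻¹ := by field_simp
      _ < (Real.sqrt π)⁻¹ := by
          gcongr
          exact sqrt_pi_lt_stirlingSeq m hm.ne'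
  -- the power identity
  have hpow : ((n:ℝ)/Real.exp 1)^n =
      ((n:ℝ)/k)^k * ((k:ℝ)/Real.exp 1)^k * (((n:ℝ)/m)^m * ((m:ℝ)/Real.exp 1)^m) := by
    have h1 : ((n:ℝ)/k) * ((k:ℝ)/Real.exp 1) = (n:ℝ)/Real.exp 1 := by
      field_simp
    have h2 : ((n:ℝ)/m) * ((m:ℝ)/Real.exp 1) = (n:ℝ)/Real.exp 1 := by
      field_simp
    rw [← mul_pow, ← mul_pow, h1, h2, ← pow_add, hkm]
  -- the sqrt identity
  have hsqrt : Real.sqrt ((n:ℝ) / (2 * π * k * m)) =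
      (Real.sqrt π)⁻¹ * (Real.sqrt (2*n) / (Real.sqrt (2*k) * Real.sqrt (2*m))) := by
    rw [← Real.sqrt_mul (by positivity : (0:ℝ) ≤ 2*(k:ℝ)), ← Real.sqrt_div (by positivity),
      ← Real.sqrt_inv, ← Real.sqrt_mul (by positivity)]
    congr 1
    field_simp
  -- RHS equals (√π)⁻¹ * (Dn / (Dk * Dm))
  have hRHS : Real.sqrt ((n:ℝ) / (2 * π * k * m)) * ((n:ℝ)/k)^k * ((n:ℝ)/m)^m
      = (Real.sqrt π)⁻¹ * (Dn / (Dk * Dm)) := by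
    rw [hsqrt, hDn, hDk, hDm, hpow]
    have h1 : Real.sqrt (2*(k:ℝ)) ≠ 0 := by positivity
    have h2 : Real.sqrt (2*(m:ℝ)) ≠ 0 := by positivity
    have h3 : ((k:ℝ)/Real.exp 1)^k ≠ 0 := by positivity
    have h4 : ((m:ℝ)/Real.exp 1)^m ≠ 0 := by positivity
    field_simp
  rw [hchoose, hfn, hfk, hfm, hRHS]
  have hLHS : a * Dn / (b * Dk * (c * Dm)) = (a / (b * c)) * (Dn / (Dk * Dm)) := by
    field_simp
  rw [hLHS]
  exact mul_lt_mul_of_pos_right hkey (by positivity)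
end

section
/- For truncation weights w_k = 1/μ for k ≤ μ and w_k = 0 otherwise, with 3 ≤ μ ≤ λ - 2, the Lipschitz constant L₁ = sup_{0<p<1} ((λ-1)/μ) C(λ-2, μ-1) p^{μ-1}(1-p)^{λ-μ-1} satisfies L₁ ≤ ((λ-1)/μ) · ((λ-2)/(2π(μ-1)(λ-μ-1)))^{1/2}. -/
open Real
open Nat

lemma stirling_fac (j : ℕ) (hj : 1 ≤ j) :
    (j ! : ℝ) = Stirling.stirlingSeq j * (Real.sqrt (2*j) * ((j:ℝ)/Real.exp 1)^j) := by
  have hj' : (0:ℝ) < j := by exact_mod_cast hj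
  have h1 : (0:ℝ) < Real.sqrt (2*j) := Real.sqrt_pos.mpr (by linarith)
  have h2 : (0:ℝ) < ((j:ℝ)/Real.exp 1)^j := by positivity
  rw [Stirling.stirlingSeq, div_mul_cancel₀]
  positivity

lemma stirling_ge (j : ℕ) (hj : 1 ≤ j) : Real.sqrt π ≤ Stirling.stirlingSeq j := by
  obtain ⟨j, rfl⟩ := Nat.exists_eq_add_of_le hj
  have ht : Filter.Tendsto (Stirling.stirlingSeq ∘ Nat.succ) Filter.atTop (nhds (Real.sqrt π)) :=
    Stirling.tendsto_stirlingSeq_sqrt_pi.comp (Filter.tendsto_add_atTop_nat 1)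
  have := Stirling.stirlingSeq'_antitone.le_of_tendsto ht j
  simpa [Nat.add_comm] using this

lemma stirling_anti {a b : ℕ} (ha : 1 ≤ a) (hab : a ≤ b) :
    Stirling.stirlingSeq b ≤ Stirling.stirlingSeq a := by
  obtain ⟨a, rfl⟩ := Nat.exists_eq_add_of_le ha
  obtain ⟨b, rfl⟩ := Nat.exists_eq_add_of_le (le_trans ha hab)
  have : a ≤ b := by omega
  simpa [Nat.add_comm] using Stirling.stirlingSeq'_antitone this

lemma key (k m : ℕ) (hk : 1 ≤ k) (hm : 1 ≤ m) (p : ℝ) (hp : 0 < p) (hp1 : p < 1) :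
    ((k+m).choose k : ℝ) * p^k * (1-p)^m ≤
      Real.sqrt (((k:ℝ)+m) / (2*π*k*m)) := by
  have hk' : (0:ℝ) < k := by exact_mod_cast hk
  have hm' : (0:ℝ) < m := by exact_mod_cast hm
  have hn' : (0:ℝ) < (k:ℝ)+m := by linarith
  set s := Stirling.stirlingSeq with hs
  have hsk : 0 < s k := by
    obtain ⟨k, rfl⟩ := Nat.exists_eq_add_of_le hk
    simpa [Nat.add_comm] using Stirling.stirlingSeq'_pos k
  have hsm : 0 < s m := by
    obtain ⟨m, rfl⟩ := Nat.exists_eq_add_of_le hm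
    simpa [Nat.add_comm] using Stirling.stirlingSeq'_pos m
  have hsn : 0 < s (k+m) := by
    have h1 : 1 ≤ k + m := by omega
    obtain ⟨j, hj⟩ := Nat.exists_eq_add_of_le h1
    rw [hj]; simpa [Nat.add_comm] using Stirling.stirlingSeq'_pos j
  have hq2k : (0:ℝ) < Real.sqrt (2*k) := Real.sqrt_pos.mpr (by linarith)
  have hq2m : (0:ℝ) < Real.sqrt (2*m) := Real.sqrt_pos.mpr (by linarith)
  have hq2n : (0:ℝ) < Real.sqrt (2*((k:ℝ)+m)) := Real.sqrt_pos.mpr (by linarith)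
  have hqpi : (0:ℝ) < Real.sqrt π := Real.sqrt_pos.mpr Real.pi_pos
  have hexp : Real.exp 1 ≠ 0 := (Real.exp_pos 1).ne'
  -- Step 1 : p^k (1-p)^m ≤ (k/n)^k (m/n)^m
  have step1 : p^k * (1-p)^m ≤ ((k:ℝ)/((k:ℝ)+m))^k * ((m:ℝ)/((k:ℝ)+m))^m := by
    set x : ℝ := ((k:ℝ)+m) * p / k with hx
    set y : ℝ := ((k:ℝ)+m) * (1-p) / m with hy
    have hx0 : 0 ≤ x := by positivity
    have hy0 : 0 ≤ y := by
      have : (0:ℝ) ≤ 1 - p := by linarith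
      positivity
    have hw : (k:ℝ)/((k:ℝ)+m) + (m:ℝ)/((k:ℝ)+m) = 1 := by field_simp
    have hgm := Real.geom_mean_le_arith_mean2_weighted
      (by positivity : (0:ℝ) ≤ (k:ℝ)/((k:ℝ)+m)) (by positivity : (0:ℝ) ≤ (m:ℝ)/((k:ℝ)+m))
      hx0 hy0 hw
    have harith : (k:ℝ)/((k:ℝ)+m) * x + (m:ℝ)/((k:ℝ)+m) * y = 1 := by
      rw [hx, hy]; field_simp; ring
    rw [harith] at hgm
    have hpow : (x ^ ((k:ℝ)/((k:ℝ)+m)) * y ^ ((m:ℝ)/((k:ℝ)+m))) ^ (((k:ℝ)+m)) ≤ 1 := by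
      have h0 : (0:ℝ) ≤ x ^ ((k:ℝ)/((k:ℝ)+m)) * y ^ ((m:ℝ)/((k:ℝ)+m)) := by positivity
      calc (x ^ ((k:ℝ)/((k:ℝ)+m)) * y ^ ((m:ℝ)/((k:ℝ)+m))) ^ (((k:ℝ)+m))
          ≤ (1:ℝ) ^ (((k:ℝ)+m)) := Real.rpow_le_rpow h0 hgm (le_of_lt hn')
        _ = 1 := Real.one_rpow _
    have hxy : x ^ k * y ^ m ≤ 1 := by
      have e1 : (x ^ ((k:ℝ)/((k:ℝ)+m)) * y ^ ((m:ℝ)/((k:ℝ)+m))) ^ (((k:ℝ)+m))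
          = x ^ k * y ^ m := by
        rw [Real.mul_rpow (by positivity) (by positivity),
          ← Real.rpow_natCast x k, ← Real.rpow_natCast y m,
          ← Real.rpow_mul hx0, ← Real.rpow_mul hy0,
          div_mul_cancel₀ _ hn'.ne', div_mul_cancel₀ _ hn'.ne']
      rwa [e1] at hpow
    have hxu : ((k:ℝ)+m) * p / k * ((k:ℝ)/((k:ℝ)+m)) = p := by field_simp
    have hyv : ((k:ℝ)+m) * (1-p) / m * ((m:ℝ)/((k:ℝ)+m)) = 1-p := by field_simp
    have e2 : p^k * (1-p)^m = (x ^ k * y ^ m) * (((k:ℝ)/((k:ℝ)+m))^k * ((m:ℝ)/((k:ℝ)+m))^m) := by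
      calc p^k * (1-p)^m
          = (x * ((k:ℝ)/((k:ℝ)+m))) ^ k * (y * ((m:ℝ)/((k:ℝ)+m))) ^ m := by
            rw [hx, hy, hxu, hyv]
        _ = (x ^ k * y ^ m) * (((k:ℝ)/((k:ℝ)+m))^k * ((m:ℝ)/((k:ℝ)+m))^m) := by
            rw [mul_pow, mul_pow]; ring
    rw [e2]
    calc (x ^ k * y ^ m) * (((k:ℝ)/((k:ℝ)+m))^k * ((m:ℝ)/((k:ℝ)+m))^m)
        ≤ 1 * (((k:ℝ)/((k:ℝ)+m))^k * ((m:ℝ)/((k:ℝ)+m))^m) := by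
          apply mul_le_mul_of_nonneg_right hxy (by positivity)
      _ = ((k:ℝ)/((k:ℝ)+m))^k * ((m:ℝ)/((k:ℝ)+m))^m := one_mul _
  -- choose as factorials
  have hC : ((k+m).choose k : ℝ) = ((k+m)! : ℝ) / ((k ! : ℝ) * (m ! : ℝ)) := by
    have h := Nat.choose_mul_factorial_mul_factorial (Nat.le_add_right k m)
    rw [Nat.add_sub_cancel_left] at h
    have h' : ((k+m).choose k : ℝ) * (k ! : ℝ) * (m ! : ℝ) = ((k+m)! : ℝ) := by
      exact_mod_cast h
    rw [eq_div_iff (by positivity), ← mul_assoc]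
    exact h'
  -- Step 2 : choose * Q = stirling ratio
  have step2 : ((k+m).choose k : ℝ) * (((k:ℝ)/((k:ℝ)+m))^k * ((m:ℝ)/((k:ℝ)+m))^m)
      = (s (k+m) * Real.sqrt (2*((k:ℝ)+m))) /
        ((s k * s m) * (Real.sqrt (2*k) * Real.sqrt (2*m))) := by
    rw [hC, stirling_fac (k+m) (by omega), stirling_fac k hk, stirling_fac m hm]
    push_cast
    field_simp
    rw [← hs]
    rw [div_pow, div_pow, div_pow, div_pow, div_pow, pow_add]
    field_simp
    ring
  -- Step 3
  have step3 : (s (k+m) * Real.sqrt (2*((k:ℝ)+m))) /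
        ((s k * s m) * (Real.sqrt (2*k) * Real.sqrt (2*m)))
      ≤ (1/Real.sqrt π) * (Real.sqrt (2*((k:ℝ)+m)) / (Real.sqrt (2*k) * Real.sqrt (2*m))) := by
    have h1 : s (k+m) ≤ s k := stirling_anti hk (Nat.le_add_right k m)
    have h2 : Real.sqrt π ≤ s m := stirling_ge m hm
    have hr : s (k+m) / (s k * s m) ≤ 1 / Real.sqrt π := by
      rw [div_le_div_iff₀ (by positivity) hqpi, one_mul]
      exact mul_le_mul h1 h2 (Real.sqrt_nonneg π) (le_of_lt hsk)
    calc (s (k+m) * Real.sqrt (2*((k:ℝ)+m))) /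
          ((s k * s m) * (Real.sqrt (2*k) * Real.sqrt (2*m)))
        = (s (k+m) / (s k * s m)) * (Real.sqrt (2*((k:ℝ)+m)) / (Real.sqrt (2*k) * Real.sqrt (2*m))) := by
          rw [div_mul_div_comm (s (k+m)) (s k * s m)]
      _ ≤ (1/Real.sqrt π) * (Real.sqrt (2*((k:ℝ)+m)) / (Real.sqrt (2*k) * Real.sqrt (2*m))) := by
          apply mul_le_mul_of_nonneg_right hr (by positivity)
  -- Step 4
  have step4 : (1/Real.sqrt π) * (Real.sqrt (2*((k:ℝ)+m)) / (Real.sqrt (2*k) * Real.sqrt (2*m)))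
      = Real.sqrt (((k:ℝ)+m) / (2*π*k*m)) := by
    rw [show ((k:ℝ)+m) / (2*π*k*m) = (2*((k:ℝ)+m)) / (π * ((2*k)*(2*m))) by
      field_simp]
    rw [Real.sqrt_div (by positivity), Real.sqrt_mul (le_of_lt Real.pi_pos),
      Real.sqrt_mul (by positivity)]
    field_simp
    rw [← Real.sqrt_mul (by positivity)]
    congr 1
    ring
  -- assemble
  calc ((k+m).choose k : ℝ) * p^k * (1-p)^m
      = ((k+m).choose k : ℝ) * (p^k * (1-p)^m) := by ring
    _ ≤ ((k+m).choose k : ℝ) * (((k:ℝ)/((k:ℝ)+m))^k * ((m:ℝ)/((k:ℝ)+m))^m) := by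
        apply mul_le_mul_of_nonneg_left step1 (by positivity)
    _ = (s (k+m) * Real.sqrt (2*((k:ℝ)+m))) /
        ((s k * s m) * (Real.sqrt (2*k) * Real.sqrt (2*m))) := step2
    _ ≤ (1/Real.sqrt π) * (Real.sqrt (2*((k:ℝ)+m)) / (Real.sqrt (2*k) * Real.sqrt (2*m))) := step3
    _ = Real.sqrt (((k:ℝ)+m) / (2*π*k*m)) := step4

/-- For truncation weights (`w_k = 1/μ` for `k ≤ μ`, else `0`) with `3 ≤ μ ≤ λ-2`,
the Lipschitz constant
`L₁ = sup_{0<p<1} ((λ-1)/μ) C(λ-2, μ-1) p^(μ-1)(1-p)^(λ-μ-1)` satisfies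
`L₁ ≤ ((λ-1)/μ) √((λ-2)/(2π(μ-1)(λ-μ-1)))`. -/
theorem L1_truncation_bound (lam mu : ℕ) (hmu : 3 ≤ mu) (hmulam : mu ≤ lam - 2)
    (L1 : ℝ)
    (hL1 : L1 = ⨆ p : Set.Ioo (0 : ℝ) 1,
      ((lam : ℝ) - 1) / mu * ((lam - 2).choose (mu - 1) : ℝ) *
        (p : ℝ) ^ (mu - 1) * (1 - (p : ℝ)) ^ (lam - mu - 1)) :
    L1 ≤ ((lam : ℝ) - 1) / mu *
      Real.sqrt (((lam : ℝ) - 2) / (2 * Real.pi * ((mu : ℝ) - 1) * ((lam : ℝ) - mu - 1))) := by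
  have hlam : mu + 2 ≤ lam := by omega
  rw [hL1]
  set k := mu - 1 with hkdef
  set m := lam - mu - 1 with hmdef
  have hk1 : 1 ≤ k := by omega
  have hm1 : 1 ≤ m := by omega
  have hkm : lam - 2 = k + m := by omega
  have c1 : (k:ℝ) + m = (lam:ℝ) - 2 := by
    have h : k + m + 2 = lam := by omega
    have := congrArg (Nat.cast : ℕ → ℝ) h
    push_cast at this; linarith
  have c2 : (k:ℝ) = (mu:ℝ) - 1 := by
    have h : k + 1 = mu := by omega
    have := congrArg (Nat.cast : ℕ → ℝ) h
    push_cast at this; linarith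
  have c3 : (m:ℝ) = (lam:ℝ) - mu - 1 := by
    have h : m + 1 + mu = lam := by omega
    have := congrArg (Nat.cast : ℕ → ℝ) h
    push_cast at this; linarith
  have hco : (0:ℝ) ≤ ((lam:ℝ) - 1) / mu := by
    have h5 : (5:ℝ) ≤ (lam:ℝ) := by exact_mod_cast (by omega : 5 ≤ lam)
    have hmu' : (0:ℝ) < (mu:ℝ) := by exact_mod_cast (by omega : 0 < mu)
    apply div_nonneg (by linarith) (le_of_lt hmu')
  haveI : Nonempty (Set.Ioo (0:ℝ) 1) := ⟨⟨1/2, by norm_num⟩⟩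
  apply ciSup_le
  rintro ⟨p, hp0, hp1⟩
  simp only [← c1, ← c2, ← c3, hkm]
  calc ((lam : ℝ) - 1) / mu * ((k + m).choose k : ℝ) * p ^ k * (1 - p) ^ m
      = ((lam : ℝ) - 1) / mu * (((k + m).choose k : ℝ) * p ^ k * (1 - p) ^ m) := by ring
    _ ≤ ((lam : ℝ) - 1) / mu * Real.sqrt (((k:ℝ) + m) / (2 * π * k * m)) := by
        exact mul_le_mul_of_nonneg_left (key k m hk1 hm1 p hp0 hp1) hco
end
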